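/- Let k ≥ 2 be an integer and α ≥ 1 a real number. Define v ∈ ℝ^k by v_1 = α^{-1/2} and v_j = α^{1/2} for 2 ≤ j ≤ k; let X := v vᵀ; and let Y ∈ ℝ^{k×k} be given by Y_{ij} = α − 1 if both i ≥ 2 and j ≥ 2, and Y_{ij} = 0 otherwise. Then: X and Y are positive semidefinite; X_{ij} − Y_{ij} = 1 for all i ≠ j; X_{11} + Y_{11} = 1/α; and X_{jj} + Y_{jj} = 2α − 1 for every j ≥ 2. -/

import Mathlib

open Matrix

lemma psd_vecMulVec {k : ℕ} (v : Fin k → ℝ) : (vecMulVec v v).PosSemidef := by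
  rw [posSemidef_iff_dotProduct_mulVec]
  constructor
  · ext i j
    simp [vecMulVec_apply, Matrix.conjTranspose_apply, mul_comm]
  · intro x
    have h : star x ⬝ᵥ (vecMulVec v v *ᵥ x) = (v ⬝ᵥ x) ^ 2 := by
      simp only [dotProduct, mulVec, vecMulVec_apply, Pi.star_apply, star_trivial, sq,
        Finset.sum_mul, Finset.mul_sum]
      rw [Finset.sum_comm]
      congr 1; ext i; congr 1; ext j; ring
    rw [h]
    positivity

/-- explicit feasible solution to the per-node SDP of the decision-tree
weighting scheme.  For `k ≥ 2` and `α ≥ 1`, let `v ∈ ℝ^k` have `v_1 = α^{-1/2}` and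
`v_j = α^{1/2}` for `j ≥ 2`, let `X := v vᵀ`, and let `Y` have entries `α - 1` in the lower
`(k-1) × (k-1)` block and `0` elsewhere.  Then `X, Y ⪰ 0`, `X_{ij} - Y_{ij} = 1` for `i ≠ j`,
`X_{11} + Y_{11} = 1/α`, and `X_{jj} + Y_{jj} = 2α - 1` for `j ≥ 2`.  (Indices are shifted:
the distinguished index `1` of the statement is the index `z : Fin k` with `(z : ℕ) = 0`.) -/
theorem decision_tree_sdp_solution
    (k : ℕ) (hk : 2 ≤ k) (α : ℝ) (hα : 1 ≤ α)
    (z : Fin k) (hz : (z : ℕ) = 0)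
    (v : Fin k → ℝ)
    (hv : ∀ j, v j = if j = z then (Real.sqrt α)⁻¹ else Real.sqrt α)
    (X Y : Matrix (Fin k) (Fin k) ℝ)
    (hX : X = vecMulVec v v)
    (hY : ∀ i j, Y i j = if i ≠ z ∧ j ≠ z then α - 1 else 0) :
    X.PosSemidef ∧ Y.PosSemidef ∧
    (∀ i j, i ≠ j → X i j - Y i j = 1) ∧
    X z z + Y z z = 1 / α ∧
    (∀ j, j ≠ z → X j j + Y j j = 2 * α - 1) := by
  have hα0 : (0:ℝ) < α := lt_of_lt_of_le one_pos hα
  have hsq : Real.sqrt α * Real.sqrt α = α := Real.mul_self_sqrt hα0.le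
  have hs0 : Real.sqrt α ≠ 0 := by positivity
  set w : Fin k → ℝ := fun i => if i = z then 0 else Real.sqrt (α - 1) with hw
  have hYw : Y = vecMulVec w w := by
    ext i j
    rw [hY, vecMulVec_apply, hw]
    by_cases hi : i = z <;> by_cases hj : j = z <;>
      simp [hi, hj, Real.mul_self_sqrt (by linarith : (0:ℝ) ≤ α - 1)]
  have hXij : ∀ i j : Fin k, X i j = v i * v j := by
    intro i j; rw [hX, vecMulVec_apply]
  refine ⟨hX ▸ psd_vecMulVec v, hYw ▸ psd_vecMulVec w, ?_, ?_, ?_⟩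
  · intro i j hij
    rw [hXij, hY, hv i, hv j]
    by_cases hi : i = z <;> by_cases hj : j = z
    · exact absurd (hi.trans hj.symm) hij
    · simp [hi, hj, inv_mul_cancel₀ hs0]
    · simp [hi, hj, mul_inv_cancel₀ hs0]
    · simp only [hi, hj, if_neg, ite_false, hsq]
      simp [hi, hj]
  · rw [hXij, hY, hv]
    simp only [if_pos rfl, ne_eq, not_true_eq_false, false_and, if_false, add_zero, if_true]
    rw [← mul_inv, hsq, one_div]
  · intro j hj
    rw [hXij, hY, hv]
    simp only [if_neg hj, ne_eq, hj, not_false_eq_true, and_self, if_pos, ite_false, hsq]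
    ring
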